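/- For q > 1 and integers 0 ≤ m ≤ l, the big q-Jacobi polynomials P^m_l satisfy the three-term recurrence x·q^m·[2l+1]·P^m_l(x) = q^l·[l+m+1]·P^m_{l+1}(x) + q^{−l−1}·[l−m]·P^m_{l−1}(x), where [a] = (q^a − q^{−a})/(q − q⁻¹) and P^m_{m−1} is interpreted as 0. -/

import Mathlib

noncomputable section

/-- Symmetric q-number [a] = (q^a − q^{−a})/(q − q⁻¹). -/
def qNum (q : ℝ) (a : ℤ) : ℝ := (q ^ a - q ^ (-a)) / (q - q⁻¹)

/-- Symmetric q-factorial [n]! = ∏_{k=1}^n [k]. -/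
def qFact (q : ℝ) (n : ℕ) : ℝ := ∏ k ∈ Finset.range n, qNum q (k + 1)

/-- Symmetric q-binomial coefficient, zero unless 0 ≤ k ≤ n. -/
def qBinom (q : ℝ) (n k : ℤ) : ℝ :=
  if 0 ≤ k ∧ k ≤ n then qFact q n.toNat / (qFact q k.toNat * qFact q (n - k).toNat)
  else 0

/-- q-Pochhammer symbol (a;p)_k = ∏_{n=0}^{k−1}(1 − a p^n). -/
def qPoch (a p : ℝ) (k : ℕ) : ℝ := ∏ n ∈ Finset.range k, (1 - a * p ^ n)

/-- (x;p)_k as a polynomial in x. -/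
def qPochPoly (p : ℝ) (k : ℕ) : Polynomial ℝ :=
  ∏ n ∈ Finset.range k, (1 - Polynomial.C (p ^ n) * Polynomial.X)

/-- The big q-Jacobi polynomial
P^m_l(x) = Σ_{k=0}^{l−m} (−1)^k q^{−k(m+1)} (x;q⁻²)_k/(−q^{−2(m+1)};q⁻²)_k
  [l−m choose k][l+m+k choose k][m+k choose k]⁻¹.
(It vanishes identically for l < m, since then [l−m choose k] = 0.) -/
def qJacobi (q : ℝ) (l m : ℕ) : Polynomial ℝ :=
  ∑ k ∈ Finset.range (l - m + 1),
    Polynomial.C ((-1 : ℝ) ^ k * q ^ (-(k : ℤ) * ((m : ℤ) + 1)) /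
        qPoch (-(q ^ (-2 * ((m : ℤ) + 1)))) (q ^ (-2 : ℤ)) k *
      (qBinom q ((l : ℤ) - (m : ℤ)) k * qBinom q ((l : ℤ) + (m : ℤ) + k) k /
        qBinom q ((m : ℤ) + k) k)) *
    qPochPoly (q ^ (-2 : ℤ)) k


-- ===================== auxiliary development =====================

lemma qNum_pos {q : ℝ} (hq : 1 < q) {a : ℤ} (ha : 0 < a) : 0 < qNum q a := by
  have hq0 : 0 < q := lt_trans one_pos hq
  have h1 : q⁻¹ < 1 := inv_lt_one_of_one_lt₀ hq
  have h2 : q ^ (-a) < q ^ a := zpow_lt_zpow_right₀ hq (by omega)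
  exact div_pos (by linarith) (by linarith)

lemma qNum_zero (q : ℝ) : qNum q 0 = 0 := by simp [qNum]

lemma qNum_congr (q : ℝ) {a b : ℤ} (h : a = b) : qNum q a = qNum q b := by rw [h]

lemma qFact_pos {q : ℝ} (hq : 1 < q) (n : ℕ) : 0 < qFact q n :=
  Finset.prod_pos fun k _ => qNum_pos hq (by positivity)

lemma qPochD_pos {q : ℝ} (hq : 1 < q) (m k : ℕ) :
    0 < qPoch (-(q ^ (-2 * ((m : ℤ) + 1)))) (q ^ (-2 : ℤ)) k := by
  have hq0 : 0 < q := lt_trans one_pos hq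
  refine Finset.prod_pos fun n _ => ?_
  have h1 : 0 < q ^ (-2 * ((m : ℤ) + 1)) := zpow_pos hq0 _
  have h2 : 0 < (q ^ (-2 : ℤ)) ^ n := by positivity
  nlinarith

lemma qFact_succ (q : ℝ) (n : ℕ) : qFact q (n + 1) = qFact q n * qNum q (n + 1) := by
  rw [qFact, Finset.prod_range_succ]; rfl

lemma qFact_ratio {q : ℝ} (n : ℕ) : ∀ k ≤ n,
    qFact q n = qFact q (n - k) * ∏ j ∈ Finset.range k, qNum q ((n : ℤ) - j) := by
  intro k
  induction k with
  | zero => simp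
  | succ k ih =>
    intro hk
    rw [Finset.prod_range_succ, ih (by omega)]
    have h1 : n - k = (n - (k+1)) + 1 := by omega
    rw [h1, qFact_succ]
    have h2 : ((n - (k+1) : ℕ) : ℤ) + 1 = (n : ℤ) - k := by omega
    rw [h2]; ring

lemma qBinom_mul_fact {q : ℝ} (hq : 1 < q) (n k : ℕ) :
    qBinom q (n : ℤ) (k : ℤ) * qFact q k = ∏ j ∈ Finset.range k, qNum q ((n : ℤ) - j) := by
  by_cases h : k ≤ n
  · rw [qBinom, if_pos ⟨Int.ofNat_nonneg k, by exact_mod_cast h⟩]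
    have h1 : ((n : ℤ)).toNat = n := Int.toNat_natCast n
    have h2 : ((k : ℤ)).toNat = k := Int.toNat_natCast k
    have h3 : ((n : ℤ) - k).toNat = n - k := by omega
    rw [h1, h2, h3, qFact_ratio n k h]
    have hk := (qFact_pos hq k).ne'
    have hnk := (qFact_pos hq (n - k)).ne'
    field_simp
  · rw [qBinom, if_neg (by push_neg; intro _; exact_mod_cast by omega : ¬_)]
    rw [zero_mul]
    refine (Finset.prod_eq_zero (Finset.mem_range.mpr (by omega : n < k)) ?_).symm
    simp [qNum]

lemma qBinom_inv {q : ℝ} (m k : ℕ) :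
    qBinom q ((m : ℤ) + k) k = qFact q (m + k) / (qFact q k * qFact q m) := by
  rw [qBinom, if_pos ⟨Int.ofNat_nonneg k, by omega⟩]
  have h1 : ((m : ℤ) + k).toNat = m + k := by omega
  have h2 : ((k : ℤ)).toNat = k := Int.toNat_natCast k
  have h3 : ((m : ℤ) + k - k).toNat = m := by omega
  rw [h1, h2, h3, Nat.add_comm m k]

/-- the scalar prefactor in the q-Jacobi coefficient -/
def qE (q : ℝ) (m k : ℕ) : ℝ :=
  (-1 : ℝ) ^ k * q ^ (-(k : ℤ) * ((m : ℤ) + 1)) * qFact q m /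
    (qPoch (-(q ^ (-2 * ((m : ℤ) + 1)))) (q ^ (-2 : ℤ)) k * qFact q k * qFact q (m + k))

def qA (q : ℝ) (L m : ℤ) (k : ℕ) : ℝ := ∏ j ∈ Finset.range k, qNum q (L - m - (j : ℤ))
def qB (q : ℝ) (L m : ℤ) (k : ℕ) : ℝ := ∏ j ∈ Finset.range k, qNum q (L + m + (k : ℤ) - (j : ℤ))

lemma qE_zero {q : ℝ} (hq : 1 < q) (m : ℕ) : qE q m 0 = 1 := by
  have h := (qFact_pos hq m).ne'
  have h0 : qFact q 0 = 1 := by simp [qFact]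
  simp [qE, qPoch, h0, div_self h]

lemma qA_zero' (q : ℝ) (L m : ℤ) : qA q L m 0 = 1 := by simp [qA]
lemma qB_zero' (q : ℝ) (L m : ℤ) : qB q L m 0 = 1 := by simp [qB]

lemma coeff_eq {q : ℝ} (hq : 1 < q) (L m k : ℕ) (hmL : m ≤ L) :
    (-1 : ℝ) ^ k * q ^ (-(k : ℤ) * ((m : ℤ) + 1)) /
        qPoch (-(q ^ (-2 * ((m : ℤ) + 1)))) (q ^ (-2 : ℤ)) k *
      (qBinom q ((L : ℤ) - (m : ℤ)) k * qBinom q ((L : ℤ) + (m : ℤ) + k) k /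
        qBinom q ((m : ℤ) + k) k) =
    qE q m k * qA q (L : ℤ) (m : ℤ) k * qB q (L : ℤ) (m : ℤ) k := by
  have hFk := (qFact_pos hq k).ne'
  have hFm := (qFact_pos hq m).ne'
  have hFmk := (qFact_pos hq (m + k)).ne'
  have hP := (qPochD_pos hq m k).ne'
  have hA : qBinom q ((L : ℤ) - (m : ℤ)) k = qA q (L : ℤ) (m : ℤ) k / qFact q k := by
    have h1 : ((L : ℤ) - (m : ℤ)) = ((L - m : ℕ) : ℤ) := by omega
    rw [h1, eq_div_iff hFk, qBinom_mul_fact hq, qA]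
    refine Finset.prod_congr rfl fun j _ => ?_
    congr 1 <;> omega
  have hB : qBinom q ((L : ℤ) + (m : ℤ) + k) k = qB q (L : ℤ) (m : ℤ) k / qFact q k := by
    have h1 : ((L : ℤ) + (m : ℤ) + k) = ((L + m + k : ℕ) : ℤ) := by push_cast; ring
    rw [h1, eq_div_iff hFk, qBinom_mul_fact hq, qB]
    refine Finset.prod_congr rfl fun j _ => ?_
    congr 1 <;> omega
  have h2 : qA q (L : ℤ) (m : ℤ) k / qFact q k * (qB q (L : ℤ) (m : ℤ) k / qFact q k) /
      (qFact q (m + k) / (qFact q k * qFact q m)) =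
      qA q (L : ℤ) (m : ℤ) k * qB q (L : ℤ) (m : ℤ) k * qFact q m /
        (qFact q k * qFact q (m + k)) := by
    field_simp
  rw [hA, hB, qBinom_inv, h2, qE]
  field_simp

lemma qE_succ {q : ℝ} (hq : 1 < q) (m i : ℕ) :
    qE q m i = qE q m (i + 1) *
      (-(q ^ ((m : ℤ) + 1)) * (1 + q ^ (-2 * ((m : ℤ) + (i : ℤ) + 1))) *
        (qNum q ((i : ℤ) + 1) * qNum q ((m : ℤ) + (i : ℤ) + 1))) := by
  have hq0 : q ≠ 0 := by positivity
  have hPi := (qPochD_pos hq m i).ne'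
  have hFi := (qFact_pos hq i).ne'
  have hFmi := (qFact_pos hq (m + i)).ne'
  have hu : (0:ℝ) < q ^ (-2 * ((m : ℤ) + (i : ℤ) + 1)) := zpow_pos (by positivity) _
  have hn1 := (qNum_pos hq (show (0:ℤ) < (i : ℤ) + 1 by omega)).ne'
  have hn2 := (qNum_pos hq (show (0:ℤ) < (m : ℤ) + (i : ℤ) + 1 by omega)).ne'
  have hpoch : qPoch (-(q ^ (-2 * ((m : ℤ) + 1)))) (q ^ (-2 : ℤ)) (i + 1) =
      qPoch (-(q ^ (-2 * ((m : ℤ) + 1)))) (q ^ (-2 : ℤ)) i *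
        (1 + q ^ (-2 * ((m : ℤ) + (i : ℤ) + 1))) := by
    rw [qPoch, Finset.prod_range_succ, ← qPoch]
    have h : q ^ (-2 * ((m : ℤ) + 1)) * (q ^ (-2 : ℤ)) ^ i = q ^ (-2 * ((m : ℤ) + (i : ℤ) + 1)) := by
      rw [← zpow_natCast (q ^ (-2 : ℤ)) i, ← zpow_mul, ← zpow_add₀ hq0]
      congr 1
      push_cast
      ring
    linear_combination (qPoch (-(q ^ (-2 * ((m : ℤ) + 1)))) (q ^ (-2 : ℤ)) i) * h
  have hfs1 : qFact q (i + 1) = qFact q i * qNum q ((i : ℤ) + 1) := by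
    rw [qFact_succ]
  have hfs2 : qFact q (m + (i + 1)) = qFact q (m + i) * qNum q ((m : ℤ) + (i : ℤ) + 1) := by
    rw [show m + (i + 1) = (m + i) + 1 by ring, qFact_succ]
    congr 1 <;> push_cast <;> ring
  have hpow : q ^ (-((i : ℤ) + 1) * ((m : ℤ) + 1)) * q ^ ((m : ℤ) + 1) =
      q ^ (-(i : ℤ) * ((m : ℤ) + 1)) := by
    rw [← zpow_add₀ hq0]
    congr 1
    ring
  have hcast : (-((i : ℕ) + 1 : ℕ) : ℤ) = -((i : ℤ) + 1) := by push_cast; ring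
  rw [qE, qE, hpoch, hfs1, hfs2, hcast, div_mul_eq_mul_div,
    div_eq_div_iff (by positivity) (by positivity)]
  linear_combination (-((-1:ℝ)^i * qFact q m * qPoch (-(q ^ (-2 * ((m : ℤ) + 1)))) (q ^ (-2 : ℤ)) i *
      (1 + q ^ (-2 * ((m : ℤ) + (i : ℤ) + 1))) * qFact q i * qNum q ((i : ℤ) + 1) *
      qFact q (m + i) * qNum q ((m : ℤ) + (i : ℤ) + 1))) * hpow

lemma qA_succ (q : ℝ) (L m : ℤ) (i : ℕ) :
    qA q L m (i + 1) = qA q L m i * qNum q (L - m - (i : ℤ)) := by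
  rw [qA, Finset.prod_range_succ, qA]

lemma qB_succ (q : ℝ) (L m : ℤ) (i : ℕ) :
    qB q L m (i + 1) = qNum q (L + m + (i : ℤ) + 1) * qB q L m i := by
  rw [qB, Finset.prod_range_succ', mul_comm]
  exact congrArg₂ (· * ·) (qNum_congr q (by push_cast; ring))
    (Finset.prod_congr rfl fun j _ => qNum_congr q (by push_cast; ring))

lemma qA_up (q : ℝ) (L m : ℤ) (i : ℕ) :
    qA q (L + 1) m (i + 1) = qNum q (L - m + 1) * qA q L m i := by
  rw [qA, Finset.prod_range_succ', mul_comm, qA]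
  exact congrArg₂ (· * ·) (qNum_congr q (by push_cast; ring))
    (Finset.prod_congr rfl fun j _ => qNum_congr q (by push_cast; ring))

lemma qB_up (q : ℝ) (L m : ℤ) (i : ℕ) :
    qNum q (L + m + 1) * qB q (L + 1) m (i + 1) =
      qNum q (L + m + (i : ℤ) + 2) * qNum q (L + m + (i : ℤ) + 1) * qB q L m i := by
  have h1 : qB q (L + 1) m (i + 1) =
      qNum q (L + m + (i : ℤ) + 2) * ∏ j ∈ Finset.range i, qNum q (L + m + (i : ℤ) + 1 - j) := by
    rw [qB, Finset.prod_range_succ', mul_comm]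
    exact congrArg₂ (· * ·) (qNum_congr q (by push_cast; ring))
      (Finset.prod_congr rfl fun j _ => qNum_congr q (by push_cast; ring))
  have e1 : (∏ j ∈ Finset.range (i+1), qNum q (L + m + (i : ℤ) + 1 - j)) =
      qNum q (L + m + (i : ℤ) + 1) * qB q L m i := by
    rw [Finset.prod_range_succ', mul_comm, qB]
    exact congrArg₂ (· * ·) (qNum_congr q (by push_cast; ring))
      (Finset.prod_congr rfl fun j _ => qNum_congr q (by push_cast; ring))
  have e2 : (∏ j ∈ Finset.range (i+1), qNum q (L + m + (i : ℤ) + 1 - j)) =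
      (∏ j ∈ Finset.range i, qNum q (L + m + (i : ℤ) + 1 - j)) * qNum q (L + m + 1) := by
    rw [Finset.prod_range_succ]
    exact congrArg₂ (· * ·) rfl (qNum_congr q (by push_cast; ring))
  have h2 : qNum q (L + m + (i : ℤ) + 1) * qB q L m i =
      (∏ j ∈ Finset.range i, qNum q (L + m + (i : ℤ) + 1 - j)) * qNum q (L + m + 1) := by
    rw [← e1, e2]
  rw [h1]
  linear_combination (qNum q (L + m + (i:ℤ) + 2)) * h2.symm

lemma qA_down (q : ℝ) (L m : ℤ) (i : ℕ) :
    qNum q (L - m) * qA q (L - 1) m (i + 1) =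
      qA q L m i * qNum q (L - m - (i : ℤ)) * qNum q (L - m - (i : ℤ) - 1) := by
  have h1 : (∏ j ∈ Finset.range (i+2), qNum q (L - m - j)) =
      qNum q (L - m) * qA q (L - 1) m (i + 1) := by
    rw [Finset.prod_range_succ', mul_comm, qA]
    exact congrArg₂ (· * ·) (qNum_congr q (by push_cast; ring))
      (Finset.prod_congr rfl fun j _ => qNum_congr q (by push_cast; ring))
  have h2 : (∏ j ∈ Finset.range (i+2), qNum q (L - m - j)) =
      qA q L m i * qNum q (L - m - (i : ℤ)) * qNum q (L - m - (i : ℤ) - 1) := by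
    rw [Finset.prod_range_succ, Finset.prod_range_succ, qA]
    exact congrArg₂ (· * ·) (congrArg₂ (· * ·) rfl (qNum_congr q (by push_cast; ring)))
      (qNum_congr q (by push_cast; ring))
  rw [← h1, h2]

lemma qB_down (q : ℝ) (L m : ℤ) (i : ℕ) :
    qB q (L - 1) m (i + 1) = qB q L m i * qNum q (L + m) := by
  rw [qB, Finset.prod_range_succ, qB]
  exact congrArg₂ (· * ·) (Finset.prod_congr rfl fun j _ => qNum_congr q (by push_cast; ring))
    (qNum_congr q (by push_cast; ring))

lemma qNum_eq {q : ℝ} (hq : 1 < q) (a : ℤ) :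
    qNum q a = (q ^ a - q ^ (-a)) * q / (q^2 - 1) := by
  have hq0 : q ≠ 0 := by positivity
  have h : q - q⁻¹ = (q^2-1)/q := by field_simp
  rw [qNum, h, div_div_eq_mul_div]

set_option maxHeartbeats 4000000 in
lemma star (q : ℝ) (hq : 1 < q) (l m k : ℤ) :
    q^m * qNum q (2*l+1) * q^(2*k) * qNum q (l-m-k+1) * qNum q (l+m+k)
      + q^m * qNum q (2*l+1) * q^(2*k-2) * q^(m+1) * (1 + q^(-2*(m+k))) * qNum q k * qNum q (m+k)
    = q^l * qNum q (l-m+1) * qNum q (l+m+k+1) * qNum q (l+m+k)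
      + q^(-l-1) * qNum q (l-m-k+1) * qNum q (l-m-k) * qNum q (l+m) := by
  have hq0 : q ≠ 0 := by positivity
  have h1 : q^2 - 1 ≠ 0 := by nlinarith
  have hXn : q ^ l ≠ 0 := zpow_ne_zero _ hq0
  have hYn : q ^ m ≠ 0 := zpow_ne_zero _ hq0
  have hZn : q ^ k ≠ 0 := zpow_ne_zero _ hq0
  simp only [qNum_eq hq]
  rw [show (2*l+1 : ℤ) = l+l+1 by ring, show (l-m-k+1 : ℤ) = l+(-m)+(-k)+1 by ring,
    show (l+m+k : ℤ) = l+m+k by ring, show (m+k : ℤ) = m+k by ring,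
    show (l-m+1 : ℤ) = l+(-m)+1 by ring, show (l+m+k+1 : ℤ) = l+m+k+1 by ring,
    show (l-m-k : ℤ) = l+(-m)+(-k) by ring, show (l+m : ℤ) = l+m by ring,
    show (2*k : ℤ) = k+k by ring, show (k+k-2 : ℤ) = k+k+(-1)+(-1) by ring,
    show (-2*(m+k) : ℤ) = (-m)+(-m)+((-k)+(-k)) by ring,
    show (-l-1 : ℤ) = (-l)+(-1) by ring]
  simp only [neg_add, neg_neg, zpow_add₀ hq0, zpow_neg, zpow_one]
  field_simp
  ring

set_option maxHeartbeats 1000000 in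
lemma star0 (q : ℝ) (hq : 1 < q) (l m : ℤ) :
    q ^ m * qNum q (2*l+1) = q ^ l * qNum q (l+m+1) + q ^ (-l-1) * qNum q (l-m) := by
  have hq0 : q ≠ 0 := by positivity
  have hden : q - q⁻¹ ≠ 0 := by
    have : q⁻¹ < 1 := inv_lt_one_of_one_lt₀ hq
    intro h; nlinarith
  have hl : q ^ l ≠ 0 := zpow_ne_zero _ hq0
  have hm : q ^ m ≠ 0 := zpow_ne_zero _ hq0
  unfold qNum
  rw [show (2*l+1 : ℤ) = l + l + 1 by ring, ← mul_div_assoc, ← mul_div_assoc, ← mul_div_assoc,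
    ← add_div, div_eq_div_iff hden hden]
  simp only [neg_add, neg_sub, neg_neg, sub_eq_add_neg, zpow_add₀ hq0, zpow_neg, zpow_one]
  field_simp
  ring

lemma star' (q : ℝ) (hq : 1 < q) (L M : ℤ) (i : ℕ) :
    q^M * qNum q (2*L+1) * q^(2*((i:ℤ)+1)) * (qNum q (L-M-(i:ℤ)) * qNum q (L+M+(i:ℤ)+1))
      + q^M * qNum q (2*L+1) * q^(2*(i:ℤ)) *
          (q^(M+1) * ((1 + q^(-2*(M+(i:ℤ)+1))) * (qNum q ((i:ℤ)+1) * qNum q (M+(i:ℤ)+1))))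
    = q^L * qNum q (L-M+1) * (qNum q (L+M+(i:ℤ)+2) * qNum q (L+M+(i:ℤ)+1))
      + q^(-L-1) * (qNum q (L-M-(i:ℤ)) * qNum q (L-M-(i:ℤ)-1) * qNum q (L+M)) := by
  have h := star q hq L M ((i:ℤ)+1)
  rw [show (L-M-((i:ℤ)+1)+1 : ℤ) = L-M-(i:ℤ) by ring,
    show (2*((i:ℤ)+1)-2 : ℤ) = 2*(i:ℤ) by ring,
    show (-2*(M+((i:ℤ)+1)) : ℤ) = -2*(M+(i:ℤ)+1) by ring,
    show (L+M+((i:ℤ)+1)+1 : ℤ) = L+M+(i:ℤ)+2 by ring,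
    show (L+M+((i:ℤ)+1) : ℤ) = L+M+(i:ℤ)+1 by ring,
    show (M+((i:ℤ)+1) : ℤ) = M+(i:ℤ)+1 by ring,
    show (L-M-((i:ℤ)+1) : ℤ) = L-M-(i:ℤ)-1 by ring] at h
  linear_combination h

lemma bracket (q : ℝ) (hq : 1 < q) (L : ℤ) (m i : ℕ) :
    q ^ (m : ℤ) * qNum q (2*L+1) * q ^ (2*((i:ℤ)+1)) *
        (qE q m (i+1) * qA q L (m:ℤ) (i+1) * qB q L (m:ℤ) (i+1))
      - q ^ (m : ℤ) * qNum q (2*L+1) * q ^ (2*(i:ℤ)) *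
        (qE q m i * qA q L (m:ℤ) i * qB q L (m:ℤ) i)
    = q ^ L * qNum q (L+(m:ℤ)+1) *
        (qE q m (i+1) * qA q (L+1) (m:ℤ) (i+1) * qB q (L+1) (m:ℤ) (i+1))
      + q ^ (-L-1) * qNum q (L-(m:ℤ)) *
        (qE q m (i+1) * qA q (L-1) (m:ℤ) (i+1) * qB q (L-1) (m:ℤ) (i+1)) := by
  have hstar := star' q hq L (m:ℤ) i
  have hBup := qB_up q L (m:ℤ) i
  have hAdn := qA_down q L (m:ℤ) i
  rw [qE_succ hq m i, qA_succ, qB_succ, qA_up, qB_down]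
  linear_combination (qE q m (i+1) * qA q L (m:ℤ) i * qB q L (m:ℤ) i) * hstar
    - (q ^ L * qNum q (L-(m:ℤ)+1) * qE q m (i+1) * qA q L (m:ℤ) i) * hBup
    - (q ^ (-L-1) * qE q m (i+1) * qB q L (m:ℤ) i * qNum q (L+(m:ℤ))) * hAdn

lemma qA_vanish (q : ℝ) (L m k : ℕ) (hmL : m ≤ L) (h : L - m < k) :
    qA q (L : ℤ) (m : ℤ) k = 0 := by
  refine Finset.prod_eq_zero (Finset.mem_range.mpr h) ?_
  rw [show ((L:ℤ) - (m:ℤ) - ((L - m : ℕ) : ℤ)) = 0 by omega, qNum_zero]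

lemma qJacobi_eval {q : ℝ} (hq : 1 < q) (L m : ℕ) (hmL : m ≤ L) (N : ℕ)
    (hN : L - m + 1 ≤ N) (x : ℝ) :
    (qJacobi q L m).eval x = ∑ k ∈ Finset.range N,
      qE q m k * qA q (L : ℤ) (m : ℤ) k * qB q (L : ℤ) (m : ℤ) k *
        (qPochPoly (q ^ (-2 : ℤ)) k).eval x := by
  have h1 : (qJacobi q L m).eval x = ∑ k ∈ Finset.range (L - m + 1),
      qE q m k * qA q (L : ℤ) (m : ℤ) k * qB q (L : ℤ) (m : ℤ) k *
        (qPochPoly (q ^ (-2 : ℤ)) k).eval x := by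
    rw [qJacobi]
    simp only [Polynomial.eval_finset_sum]
    refine Finset.sum_congr rfl fun k _ => ?_
    rw [Polynomial.eval_mul, Polynomial.eval_C, coeff_eq hq L m k hmL]
  rw [h1]
  apply Finset.sum_subset (Finset.range_subset_range.mpr hN)
  intro k hk1 hk
  rw [qA_vanish q L m k hmL (by simp only [Finset.mem_range] at hk ⊢; omega)]
  ring

lemma phi_succ {q : ℝ} (hq : 1 < q) (k : ℕ) (x : ℝ) :
    x * (qPochPoly (q ^ (-2 : ℤ)) k).eval x =
      q ^ (2 * (k : ℤ)) * ((qPochPoly (q ^ (-2 : ℤ)) k).eval x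
        - (qPochPoly (q ^ (-2 : ℤ)) (k + 1)).eval x) := by
  have hq0 : q ≠ 0 := by positivity
  have h1 : (qPochPoly (q ^ (-2 : ℤ)) (k + 1)).eval x =
      (qPochPoly (q ^ (-2 : ℤ)) k).eval x * (1 - (q ^ (-2 : ℤ)) ^ k * x) := by
    rw [qPochPoly, Finset.prod_range_succ, ← qPochPoly]
    simp [Polynomial.eval_mul]
  have h2 : q ^ (2 * (k : ℤ)) * (q ^ (-2 : ℤ)) ^ k = 1 := by
    rw [← zpow_natCast (q ^ (-2 : ℤ)) k, ← zpow_mul, ← zpow_add₀ hq0,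
      show (2 * (k:ℤ) + (-2) * (k:ℕ) : ℤ) = 0 by push_cast; ring, zpow_zero]
  rw [h1]
  linear_combination (-(x * (qPochPoly (q ^ (-2 : ℤ)) k).eval x)) * h2


def qPhi (q x : ℝ) (k : ℕ) : ℝ := (qPochPoly (q ^ (-2 : ℤ)) k).eval x

def qG (q : ℝ) (l m : ℕ) (k : ℕ) : ℝ :=
  q ^ ((m : ℤ)) * qNum q (2*(l:ℤ)+1) * q ^ (2*(k:ℤ)) *
    (qE q m k * qA q (l:ℤ) (m:ℤ) k * qB q (l:ℤ) (m:ℤ) k)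

def qR (q : ℝ) (l m : ℕ) (k : ℕ) : ℝ :=
  q ^ ((l : ℤ)) * qNum q ((l:ℤ)+(m:ℤ)+1) *
      (qE q m k * qA q ((l:ℤ)+1) (m:ℤ) k * qB q ((l:ℤ)+1) (m:ℤ) k)
    + q ^ (-(l:ℤ)-1) * qNum q ((l:ℤ)-(m:ℤ)) *
      (qE q m k * qA q ((l:ℤ)-1) (m:ℤ) k * qB q ((l:ℤ)-1) (m:ℤ) k)

lemma GR_succ {q : ℝ} (hq : 1 < q) (l m i : ℕ) :
    qG q l m (i+1) - qG q l m i = qR q l m (i+1) := by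
  have hb := bracket q hq (l:ℤ) m i
  have hcst : ((i+1 : ℕ) : ℤ) = (i:ℤ)+1 := by push_cast; ring
  simp only [qG, qR]
  rw [hcst]
  linear_combination hb

lemma GR_zero {q : ℝ} (hq : 1 < q) (l m : ℕ) : qG q l m 0 = qR q l m 0 := by
  have h0 := star0 q hq (l:ℤ) (m:ℤ)
  simp only [qG, qR, qE_zero hq, qA_zero', qB_zero']
  have hp : q ^ (2*((0:ℕ):ℤ)) = 1 := by norm_num
  rw [hp]
  linear_combination h0

lemma sum_main {q : ℝ} (hq : 1 < q) (l m : ℕ) (hml : m ≤ l) (x : ℝ) :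
    (∑ k ∈ Finset.range (l - m + 2), qG q l m k * qPhi q x k)
      - (∑ k ∈ Finset.range (l - m + 2), qG q l m k * qPhi q x (k+1))
    = ∑ k ∈ Finset.range (l - m + 2), qR q l m k * qPhi q x k := by
  rw [show l - m + 2 = (l - m + 1) + 1 by ring]
  rw [Finset.sum_range_succ (fun k => qG q l m k * qPhi q x (k+1)) (l - m + 1)]
  have hvan : qG q l m (l - m + 1) = 0 := by
    simp only [qG]
    rw [qA_vanish q l m (l - m + 1) hml (by omega)]
    ring
  rw [hvan, zero_mul, add_zero]
  rw [Finset.sum_range_succ' (fun k => qG q l m k * qPhi q x k) (l - m + 1),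
      Finset.sum_range_succ' (fun k => qR q l m k * qPhi q x k) (l - m + 1)]
  have hs : (∑ i ∈ Finset.range (l - m + 1), qG q l m (i+1) * qPhi q x (i+1))
      - (∑ i ∈ Finset.range (l - m + 1), qG q l m i * qPhi q x (i+1))
      = ∑ i ∈ Finset.range (l - m + 1), qR q l m (i+1) * qPhi q x (i+1) := by
    rw [← Finset.sum_sub_distrib]
    refine Finset.sum_congr rfl fun i _ => ?_
    rw [← GR_succ hq l m i]
    ring
  have h0 := GR_zero hq l m
  linear_combination hs + (qPhi q x 0) * h0

-- ===================== end auxiliary development =====================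

/-- three-term recurrence
x q^m [2l+1] P^m_l(x) = q^l [l+m+1] P^m_{l+1}(x) + q^{−l−1}[l−m] P^m_{l−1}(x)
for 0 ≤ m ≤ l (P^m_{m−1} interpreted as 0; indeed `qJacobi q (m-1) m = 0`). -/
theorem stmt11 (q : ℝ) (hq : 1 < q) (l m : ℕ) (hml : m ≤ l) :
    ∀ x : ℝ,
      x * q ^ (m : ℕ) * qNum q (2 * l + 1) * (qJacobi q l m).eval x =
        q ^ (l : ℕ) * qNum q ((l : ℤ) + m + 1) * (qJacobi q (l + 1) m).eval x +
        q ^ (-(l : ℤ) - 1) * qNum q ((l : ℤ) - m) * (qJacobi q (l - 1) m).eval x := by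
  intro x
  have hq0 : q ≠ 0 := by positivity
  have e1 : (qJacobi q l m).eval x = ∑ k ∈ Finset.range (l - m + 2),
      qE q m k * qA q (l:ℤ) (m:ℤ) k * qB q (l:ℤ) (m:ℤ) k * qPhi q x k :=
    qJacobi_eval hq l m hml (l - m + 2) (by omega) x
  have e2 : (qJacobi q (l+1) m).eval x = ∑ k ∈ Finset.range (l - m + 2),
      qE q m k * qA q ((l:ℤ)+1) (m:ℤ) k * qB q ((l:ℤ)+1) (m:ℤ) k * qPhi q x k := by
    have h := qJacobi_eval hq (l+1) m (by omega) (l - m + 2) (by omega) x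
    rw [h]
    refine Finset.sum_congr rfl fun k _ => ?_
    rw [show ((l+1 : ℕ) : ℤ) = (l:ℤ)+1 by push_cast; ring]
    rfl
  have e3 : qNum q ((l:ℤ) - (m:ℤ)) * (qJacobi q (l-1) m).eval x =
      ∑ k ∈ Finset.range (l - m + 2), qNum q ((l:ℤ)-(m:ℤ)) *
        (qE q m k * qA q ((l:ℤ)-1) (m:ℤ) k * qB q ((l:ℤ)-1) (m:ℤ) k) * qPhi q x k := by
    rcases Nat.eq_or_lt_of_le hml with heq | hlt
    · rw [show ((l:ℤ) - (m:ℤ)) = 0 by omega, qNum_zero, zero_mul]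
      symm
      exact Finset.sum_eq_zero fun k _ => by ring
    · have h := qJacobi_eval hq (l-1) m (by omega) (l - m + 2) (by omega) x
      rw [h, Finset.mul_sum]
      refine Finset.sum_congr rfl fun k _ => ?_
      rw [show ((l-1 : ℕ) : ℤ) = (l:ℤ)-1 by omega]
      simp only [qPhi]
      ring
  have eL : x * q ^ (m : ℕ) * qNum q (2 * (l:ℤ) + 1) * (qJacobi q l m).eval x =
      (∑ k ∈ Finset.range (l - m + 2), qG q l m k * qPhi q x k)
        - (∑ k ∈ Finset.range (l - m + 2), qG q l m k * qPhi q x (k+1)) := by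
    rw [e1, Finset.mul_sum, ← Finset.sum_sub_distrib]
    refine Finset.sum_congr rfl fun k _ => ?_
    have hphi := phi_succ hq k x
    have hpc : (q : ℝ) ^ (m : ℕ) = q ^ ((m : ℤ)) := (zpow_natCast q m).symm
    simp only [qG, qPhi]
    rw [hpc]
    linear_combination (q ^ ((m:ℤ)) * qNum q (2*(l:ℤ)+1) *
      (qE q m k * qA q (l:ℤ) (m:ℤ) k * qB q (l:ℤ) (m:ℤ) k)) * hphi
  have eR : q ^ (l : ℕ) * qNum q ((l:ℤ) + (m:ℤ) + 1) * (qJacobi q (l+1) m).eval x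
      + q ^ (-(l:ℤ) - 1) * qNum q ((l:ℤ) - (m:ℤ)) * (qJacobi q (l-1) m).eval x
      = ∑ k ∈ Finset.range (l - m + 2), qR q l m k * qPhi q x k := by
    have hpc : (q : ℝ) ^ (l : ℕ) = q ^ ((l : ℤ)) := (zpow_natCast q l).symm
    rw [hpc, e2, mul_assoc (q ^ (-(l:ℤ) - 1)) (qNum q ((l:ℤ) - (m:ℤ))) _, e3,
      Finset.mul_sum, Finset.mul_sum, ← Finset.sum_add_distrib]
    refine Finset.sum_congr rfl fun k _ => ?_
    simp only [qR]
    ring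
  exact eL.trans ((sum_main hq l m hml x).trans eR.symm)

end
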